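/- arXiv:1907.02304 — 4 statements merged into one kernel-verified Lean document; each statement's English description precedes it below -/
import Mathlib

section
/- For every nonzero x ∈ ℝ³, the Oseen tensor matrix Φ(x) is symmetric and positive semidefinite, and its operator norm as a linear map on Euclidean ℝ³ equals 1/(4π‖x‖). -/
/-- The Oseen tensor, as a real 3×3 matrix:
`Φ(x) = (1/(8π)) (‖x‖⁻¹ I + ‖x‖⁻³ x xᵀ)`. -/
noncomputable def oseenTensor (x : EuclideanSpace ℝ (Fin 3)) : Matrix (Fin 3) (Fin 3) ℝ :=
  (8 * Real.pi)⁻¹ • (‖x‖⁻¹ • (1 : Matrix (Fin 3) (Fin 3) ℝ) +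
    (‖x‖ ^ 3)⁻¹ • Matrix.vecMulVec (fun i => x i) (fun i => x i))

open Real Matrix


theorem oseen_mulVec (x : EuclideanSpace ℝ (Fin 3)) (y : Fin 3 → ℝ) :
    (oseenTensor x) *ᵥ y =
      fun i => (8 * Real.pi)⁻¹ * (‖x‖⁻¹ * y i + (‖x‖ ^ 3)⁻¹ * ((∑ j, x j * y j) * x i)) := by
  funext i
  fin_cases i <;>
    · simp [oseenTensor, Matrix.mulVec, dotProduct, Fin.sum_univ_three,
        Matrix.one_apply, Matrix.vecMulVec_apply]
      ring

open scoped RealInnerProductSpace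

theorem inner_eq_sum (x y : EuclideanSpace ℝ (Fin 3)) : ⟪x, y⟫ = ∑ j, x j * y j := by
  simp [PiLp.inner_apply, RCLike.inner_apply]
  exact Finset.sum_congr rfl fun _ _ => mul_comm _ _

theorem oseen_apply (x y : EuclideanSpace ℝ (Fin 3)) :
    Matrix.toEuclideanLin (oseenTensor x) y =
      ((8 * Real.pi)⁻¹ * ‖x‖⁻¹) • y +
        ((8 * Real.pi)⁻¹ * ((‖x‖ ^ 3)⁻¹ * ⟪x, y⟫)) • x := by
  ext i
  have h := congrFun (oseen_mulVec x (fun j => y j)) i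
  have hl : (Matrix.toEuclideanLin (oseenTensor x) y) i = ((oseenTensor x) *ᵥ fun j => y j) i := rfl
  rw [hl, h, inner_eq_sum]
  simp only [PiLp.add_apply, PiLp.smul_apply, smul_eq_mul]
  ring


/-- for every nonzero `x ∈ ℝ³`, the Oseen tensor matrix `Φ(x)` is symmetric,
positive semidefinite, and its operator norm as a linear map on Euclidean `ℝ³` equals
`1/(4π‖x‖)`. -/
theorem oseenTensor_isSymm_posSemidef_opNorm (x : EuclideanSpace ℝ (Fin 3)) (hx : x ≠ 0) :
    (oseenTensor x).IsSymm ∧ (oseenTensor x).PosSemidef ∧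
      ‖LinearMap.toContinuousLinearMap (Matrix.toEuclideanLin (oseenTensor x))‖
        = (4 * Real.pi * ‖x‖)⁻¹ := by
  have hr : 0 < ‖x‖ := norm_pos_iff.mpr hx
  have hπ : 0 < Real.pi := Real.pi_pos
  refine ⟨?_, posSemidef_iff_dotProduct_mulVec.mpr ⟨?_, ?_⟩, ?_⟩
  · ext i j
    simp [oseenTensor, Matrix.one_apply, Matrix.vecMulVec_apply, Matrix.transpose_apply,
      eq_comm, mul_comm]
    split_ifs <;> ring
  · ext i j
    simp [oseenTensor, Matrix.one_apply, Matrix.vecMulVec_apply, Matrix.conjTranspose_apply,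
      eq_comm, mul_comm]
    split_ifs <;> ring
  · intro y
    rw [oseen_mulVec]
    have : (star y) ⬝ᵥ (fun i => (8 * Real.pi)⁻¹ *
        (‖x‖⁻¹ * y i + (‖x‖ ^ 3)⁻¹ * ((∑ j, x j * y j) * x i)))
        = (8 * Real.pi)⁻¹ * ‖x‖⁻¹ * (∑ i, (y i) ^ 2)
          + (8 * Real.pi)⁻¹ * (‖x‖ ^ 3)⁻¹ * (∑ j, x j * y j) ^ 2 := by
      simp only [dotProduct, star_trivial, sq]
      rw [Finset.mul_sum, Finset.mul_sum, Finset.mul_sum, ← Finset.sum_add_distrib]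
      refine Finset.sum_congr rfl fun i _ => ?_
      ring
    rw [this]
    positivity
  · set T := LinearMap.toContinuousLinearMap (Matrix.toEuclideanLin (oseenTensor x)) with hT
    have key : ∀ y, T y = ((8 * Real.pi)⁻¹ * ‖x‖⁻¹) • y +
        ((8 * Real.pi)⁻¹ * ((‖x‖ ^ 3)⁻¹ * ⟪x, y⟫)) • x := fun y => oseen_apply x y
    have hk : (4 * Real.pi * ‖x‖)⁻¹ = 2 * ((8 * Real.pi)⁻¹ * ‖x‖⁻¹) := by
      field_simp; ring
    have hb : (‖x‖ ^ 3)⁻¹ * ‖x‖ ^ 2 = ‖x‖⁻¹ := by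
      field_simp
    apply le_antisymm
    · apply ContinuousLinearMap.opNorm_le_bound _ (by positivity)
      intro y
      rw [key y]
      calc ‖((8 * Real.pi)⁻¹ * ‖x‖⁻¹) • y + ((8 * Real.pi)⁻¹ * ((‖x‖ ^ 3)⁻¹ * ⟪x, y⟫)) • x‖
          ≤ ‖((8 * Real.pi)⁻¹ * ‖x‖⁻¹) • y‖ + ‖((8 * Real.pi)⁻¹ * ((‖x‖ ^ 3)⁻¹ * ⟪x, y⟫)) • x‖ :=
            norm_add_le _ _
        _ = (8 * Real.pi)⁻¹ * ‖x‖⁻¹ * ‖y‖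
            + (8 * Real.pi)⁻¹ * ((‖x‖ ^ 3)⁻¹ * |⟪x, y⟫|) * ‖x‖ := by
            rw [norm_smul, norm_smul]
            simp [abs_of_nonneg, Real.pi_pos.le, hr.le, abs_mul,
              abs_of_nonneg (inv_nonneg.mpr (by positivity : (0:ℝ) ≤ 8 * Real.pi)),
              abs_of_nonneg (inv_nonneg.mpr (by positivity : (0:ℝ) ≤ ‖x‖ ^ 3))]
        _ ≤ (8 * Real.pi)⁻¹ * ‖x‖⁻¹ * ‖y‖
            + (8 * Real.pi)⁻¹ * ((‖x‖ ^ 3)⁻¹ * (‖x‖ * ‖y‖)) * ‖x‖ := by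
            have := abs_real_inner_le_norm x y
            gcongr
        _ = (4 * Real.pi * ‖x‖)⁻¹ * ‖y‖ := by
            rw [hk]
            field_simp
            ring
    · have hx2 : T x = ((4 * Real.pi * ‖x‖)⁻¹) • x := by
        rw [key x, real_inner_self_eq_norm_sq, hb, ← add_smul, hk, two_mul]
      have h1 : ‖T x‖ = (4 * Real.pi * ‖x‖)⁻¹ * ‖x‖ := by
        rw [hx2, norm_smul, Real.norm_eq_abs, abs_of_nonneg (by positivity)]
      have h2 := T.le_opNorm x
      rw [h1] at h2
      exact le_of_mul_le_mul_right (by linarith) hr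
end

section
/- There exists a universal constant C > 0 such that the following holds. Assume in addition that 27·M·W³ ≤ 1 (equivalently 3W ≤ M^{−1/3}). Then for every real k ∈ [0,2] and every index i ∈ {1,…,N}: (1/N)·∑_{j≠i} ‖x_i − x_j‖^{−k} ≤ C·(M·W³·d_min^{−k} + M^{k/3}). -/
open MeasureTheory
open scoped ENNReal NNReal

/-- Euclidean `ℝ³`. -/
abbrev E3 : Type := EuclideanSpace ℝ (Fin 3)


lemma counting_lemma {N : ℕ} {M W : ℝ} {μ : Measure E3} {T : E3 → E3} {x : Fin N → E3}
    (hN : 0 < N) (hM : 0 < M) (hW : 0 < W)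
    (hMd : ∀ A : Set E3, μ A ≤ ENNReal.ofReal M * volume A)
    (hT : Measurable T) (hWae : ∀ᵐ y ∂μ, ‖T y - y‖ ≤ W)
    (hmap : μ.map T = (N : ℝ≥0∞)⁻¹ • ∑ j : Fin N, Measure.dirac (x j))
    (i : Fin N) (u : Finset (Fin N)) (r : ℝ) (hr : 0 ≤ r)
    (hu : ∀ j ∈ u, ‖x i - x j‖ ≤ r) :
    (u.card : ℝ) ≤ N * (M * ((r + W) ^ 3 *
      (volume (Metric.ball (0:E3) 1)).toReal)) := by
  classical
  set V : ℝ≥0∞ := volume (Metric.ball (0:E3) 1) with hV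
  have hVlt : V ≠ ⊤ := (measure_ball_lt_top).ne
  set P : Set E3 := ↑(u.image x) with hP
  have hPm : MeasurableSet P := (u.image x).measurableSet
  -- lower bound on the pushforward measure of P
  have h1 : (u.card : ℝ≥0∞) ≤ ∑ j : Fin N, Measure.dirac (x j) P := by
    have : ∀ j ∈ u, (1:ℝ≥0∞) ≤ Measure.dirac (x j) P := by
      intro j hj
      rw [Measure.dirac_apply' _ hPm]
      have hxj : x j ∈ P := by
        simp only [hP, Finset.coe_image, Set.mem_image]
        exact ⟨j, by simpa using hj, rfl⟩
      simp [Set.indicator_of_mem hxj]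
    calc (u.card : ℝ≥0∞) = ∑ _j ∈ u, 1 := by simp
    _ ≤ ∑ j ∈ u, Measure.dirac (x j) P := Finset.sum_le_sum this
    _ ≤ ∑ j : Fin N, Measure.dirac (x j) P :=
        Finset.sum_le_sum_of_subset (Finset.subset_univ u)
  have h2 : (N : ℝ≥0∞)⁻¹ * (u.card : ℝ≥0∞) ≤ μ (T ⁻¹' P) := by
    have hmapP : μ.map T P = (N : ℝ≥0∞)⁻¹ * ∑ j : Fin N, Measure.dirac (x j) P := by
      rw [hmap]
      simp [Measure.smul_apply, Measure.finset_sum_apply]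
    calc (N : ℝ≥0∞)⁻¹ * (u.card : ℝ≥0∞)
        ≤ (N : ℝ≥0∞)⁻¹ * ∑ j : Fin N, Measure.dirac (x j) P :=
          mul_le_mul_right h1 _
    _ = μ.map T P := hmapP.symm
    _ = μ (T ⁻¹' P) := Measure.map_apply hT hPm
  -- the preimage is a.e. contained in a ball
  have h3 : μ (T ⁻¹' P) ≤ μ (Metric.closedBall (x i) (r + W)) := by
    apply measure_mono_ae
    filter_upwards [hWae] with y hy hyP
    have hyP' : T y ∈ x '' ↑u := by rw [hP, Finset.coe_image] at hyP; exact hyP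
    obtain ⟨j, hj', hxy⟩ := hyP'
    have hj : j ∈ u := by simpa using hj'
    have hdist : ‖x i - y‖ ≤ r + W := by
      calc ‖x i - y‖ = ‖(x i - T y) + (T y - y)‖ := by
            congr 1; abel
      _ ≤ ‖x i - T y‖ + ‖T y - y‖ := norm_add_le _ _
      _ ≤ r + W := add_le_add (by rw [← hxy]; exact hu j hj) hy
    have : dist y (x i) ≤ r + W := by
      rw [dist_eq_norm, norm_sub_rev]; exact hdist
    exact Metric.mem_closedBall.2 this
  have h4 : μ (Metric.closedBall (x i) (r + W)) ≤
      ENNReal.ofReal M * (ENNReal.ofReal ((r + W) ^ 3) * V) := by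
    refine (hMd _).trans ?_
    have := Measure.addHaar_closedBall (volume : Measure E3) (x i)
      (by positivity : (0:ℝ) ≤ r + W)
    rw [this]
    have h3 : Module.finrank ℝ E3 = 3 := by
      simp [finrank_euclideanSpace]
    rw [h3]
  -- assemble
  have h5 : (u.card : ℝ≥0∞) ≤ (N : ℝ≥0∞) *
      (ENNReal.ofReal M * (ENNReal.ofReal ((r + W) ^ 3) * V)) := by
    rw [← ENNReal.inv_mul_le_iff (by exact_mod_cast hN.ne') (by simp)]
    exact h2.trans (h3.trans h4)
  have hVr : V = ENNReal.ofReal V.toReal := (ENNReal.ofReal_toReal hVlt).symm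
  rw [hVr] at h5
  have h6 : (u.card : ℝ≥0∞) ≤ ENNReal.ofReal
      (N * (M * ((r + W) ^ 3 * V.toReal))) := by
    refine h5.trans (le_of_eq ?_)
    rw [ENNReal.ofReal_mul (by positivity), ENNReal.ofReal_mul hM.le,
      ENNReal.ofReal_mul (by positivity), ENNReal.ofReal_natCast]
  have := ENNReal.toReal_mono ENNReal.ofReal_ne_top h6
  rw [ENNReal.toReal_ofReal (by positivity)] at this
  simpa using this

lemma geom_rpow_sum_le {W q : ℝ} (hW : 0 < W) (hq : 1 ≤ q) (n : ℕ) :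
    ∑ m ∈ Finset.range n, ((2:ℝ)^m * W) ^ q ≤ ((2:ℝ)^n * W) ^ q := by
  have h2q : (2:ℝ) ≤ (2:ℝ) ^ q := by
    calc (2:ℝ) = (2:ℝ) ^ (1:ℝ) := (Real.rpow_one 2).symm
    _ ≤ (2:ℝ) ^ q := Real.rpow_le_rpow_of_exponent_le one_le_two hq
  have hterm : ∀ m : ℕ, ((2:ℝ)^m * W) ^ q = ((2:ℝ)^q)^m * W ^ q := by
    intro m
    rw [Real.mul_rpow (by positivity) hW.le]
    congr 1
    rw [← Real.rpow_natCast (2:ℝ) m, ← Real.rpow_mul (by norm_num),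
      mul_comm, Real.rpow_mul (by norm_num), Real.rpow_natCast]
  simp only [hterm]
  rw [← Finset.sum_mul]
  have hgeom : ∑ m ∈ Finset.range n, ((2:ℝ)^q)^m ≤ ((2:ℝ)^q)^n := by
    rw [geom_sum_eq (by linarith : (2:ℝ)^q ≠ 1)]
    have h1 : (1:ℝ) ≤ ((2:ℝ)^q)^n := one_le_pow₀ (by linarith)
    have h2 : (1:ℝ) ≤ (2:ℝ)^q - 1 := by linarith
    calc (((2:ℝ)^q)^n - 1) / ((2:ℝ)^q - 1) ≤ ((2:ℝ)^q)^n - 1 :=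
      div_le_self (by linarith) h2
    _ ≤ ((2:ℝ)^q)^n := by linarith
  exact mul_le_mul_of_nonneg_right hgeom (by positivity)

set_option maxHeartbeats 1000000 in
/-- there is a universal constant `C > 0` such that for any `N ≥ 2`,
`M, W > 0`, any probability measure `μ` on `ℝ³` with density bounded by `M`, any
measurable transport map `T` with `‖T(y) − y‖ ≤ W` μ-a.e. pushing `μ` to the empirical
measure of points `x₁, …, x_N` whose minimal pairwise distance `d_min` is positive, if
`27 M W³ ≤ 1` then for every `k ∈ [0,2]` and every `i`,
`(1/N) ∑_{j≠i} ‖x_i − x_j‖^{−k} ≤ C (M W³ d_min^{−k} + M^{k/3})`. -/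
theorem discrete_sum_inv_dist_pow_le :
    ∃ C : ℝ, 0 < C ∧
      ∀ (N : ℕ) (M W : ℝ) (μ : Measure E3) (T : E3 → E3) (x : Fin N → E3) (dmin : ℝ),
        2 ≤ N → 0 < M → 0 < W →
        IsProbabilityMeasure μ →
        (∀ A : Set E3, μ A ≤ ENNReal.ofReal M * volume A) →
        Measurable T →
        (∀ᵐ y ∂μ, ‖T y - y‖ ≤ W) →
        μ.map T = (N : ℝ≥0∞)⁻¹ • ∑ j : Fin N, Measure.dirac (x j) →
        dmin = sInf {d : ℝ | ∃ i j : Fin N, i ≠ j ∧ d = ‖x i - x j‖} →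
        0 < dmin →
        27 * M * W ^ 3 ≤ 1 →
        ∀ k : ℝ, 0 ≤ k → k ≤ 2 → ∀ i : Fin N,
          (N : ℝ)⁻¹ * ∑ j ∈ Finset.univ.filter (fun j => j ≠ i), ‖x i - x j‖ ^ (-k)
            ≤ C * (M * W ^ 3 * dmin ^ (-k) + M ^ (k / 3)) := by

  classical
  set v : ℝ := (volume (Metric.ball (0:E3) 1)).toReal with hv
  have hv0 : (0:ℝ) ≤ v := ENNReal.toReal_nonneg
  refine ⟨1000 * (v + 1), by positivity, ?_⟩
  intro N M W μ T x dmin hN hM hW hμ hMd hT hWae hmap hdmin hd0 h27 k hk0 hk2 i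
  have hNpos : 0 < N := lt_of_lt_of_le (by norm_num) hN
  have hN0 : (0:ℝ) < N := by exact_mod_cast hNpos
  -- distances are at least dmin
  have hdle : ∀ j : Fin N, j ≠ i → dmin ≤ ‖x i - x j‖ := by
    intro j hj
    rw [hdmin]
    apply csInf_le
    · refine ⟨0, ?_⟩
      rintro a ⟨i', j', -, rfl⟩
      exact norm_nonneg _
    · exact ⟨i, j, hj.symm, rfl⟩
  -- the scale R
  set R : ℝ := M ^ (-(1/3) : ℝ) with hR
  have hR0 : 0 < R := Real.rpow_pos_of_pos hM _
  have hR3 : R ^ (3:ℕ) = M⁻¹ := by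
    rw [hR, ← Real.rpow_natCast (M ^ (-(1/3):ℝ)) 3, ← Real.rpow_mul hM.le]
    norm_num
    exact Real.rpow_neg_one M
  have hWR : W ≤ R := by
    have h1 : (3*W) ^ (3:ℕ) ≤ R ^ (3:ℕ) := by
      rw [hR3]
      have : 27 * W^3 * M ≤ 1 := by nlinarith
      have h2 : 27 * W^3 ≤ M⁻¹ := by
        rw [inv_eq_one_div, le_div_iff₀ hM]; linarith
      calc (3*W)^(3:ℕ) = 27 * W^3 := by ring
      _ ≤ M⁻¹ := h2
    have h3 : 3*W ≤ R :=
      le_of_pow_le_pow_left₀ (by norm_num) hR0.le h1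
    linarith
  have hRk : R ^ (-k) = M ^ (k/3) := by
    rw [hR, ← Real.rpow_mul hM.le]
    congr 1; ring
  have hMR : M * R ^ ((3:ℝ) - k) = M ^ (k/3) := by
    rw [hR, ← Real.rpow_mul hM.le]
    nth_rewrite 1 [← Real.rpow_one M]
    rw [← Real.rpow_add hM]
    congr 1; ring
  set f : Fin N → ℝ := fun j => ‖x i - x j‖ with hf
  set g : Fin N → ℝ := fun j => f j ^ (-k) with hg
  have hg0 : ∀ j, 0 ≤ g j := fun j => Real.rpow_nonneg (norm_nonneg _) _
  set s : Finset (Fin N) := Finset.univ.filter (fun j => j ≠ i) with hs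
  have hcount : ∀ (r : ℝ), 0 ≤ r → ∀ u : Finset (Fin N), u ⊆ s →
      (∀ j ∈ u, f j ≤ r) → ((u.card : ℝ)) ≤ N * (M * ((r + W)^3 * v)) := by
    intro r hr u _ hu
    exact counting_lemma hNpos hM hW hMd hT hWae hmap i u r hr hu
  -- choose n
  have hex : ∃ n : ℕ, R ≤ 2^n * W := by
    obtain ⟨n, hn⟩ := pow_unbounded_of_one_lt (R / W) (one_lt_two)
    exact ⟨n, le_of_lt ((div_lt_iff₀ hW).1 hn)⟩
  obtain ⟨n, hnspec, hnmin⟩ : ∃ n : ℕ, R ≤ 2^n * W ∧ ∀ m, m < n → (2:ℝ)^m * W < R :=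
    ⟨Nat.find hex, Nat.find_spec hex, fun m hm => lt_of_not_ge (Nat.find_min hex hm)⟩
  have h2n : (2:ℝ)^n * W ≤ 2 * R := by
    rcases Nat.eq_zero_or_pos n with h0 | hpos
    · rw [h0]; simpa using hWR.trans (by linarith)
    · obtain ⟨m, hm⟩ : ∃ m, n = m + 1 := ⟨n - 1, (Nat.succ_pred_eq_of_pos hpos).symm⟩
      have h1 := hnmin m (by omega)
      calc (2:ℝ)^n * W = 2 * ((2:ℝ)^m * W) := by rw [hm, pow_succ]; ring
      _ ≤ 2 * R := by linarith
  -- splitting the sum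
  have hsplit1 : ∑ j ∈ s, g j =
      ∑ j ∈ s.filter (fun j => f j ≤ W), g j +
      ∑ j ∈ s.filter (fun j => ¬ f j ≤ W), g j :=
    (Finset.sum_filter_add_sum_filter_not s _ g).symm
  set s' : Finset (Fin N) := s.filter (fun j => ¬ f j ≤ W) with hs'
  have hsplit2 : ∑ j ∈ s', g j =
      ∑ j ∈ s'.filter (fun j => f j ≤ 2^n * W), g j +
      ∑ j ∈ s'.filter (fun j => ¬ f j ≤ 2^n * W), g j :=
    (Finset.sum_filter_add_sum_filter_not s' _ g).symm
  -- Part 1 : close points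
  have hpart1 : ∑ j ∈ s.filter (fun j => f j ≤ W), g j ≤
      (N : ℝ) * (8 * (v * (M * (W^3 * dmin ^ (-k))))) := by
    have hterm : ∀ j ∈ s.filter (fun j => f j ≤ W), g j ≤ dmin ^ (-k) := by
      intro j hj
      have hji : j ≠ i := (Finset.mem_filter.1 (Finset.mem_filter.1 hj).1).2
      exact Real.rpow_le_rpow_of_nonpos hd0 (hdle j hji) (neg_nonpos.2 hk0)
    have hcard := hcount W hW.le (s.filter (fun j => f j ≤ W))
      (Finset.filter_subset _ _) (fun j hj => (Finset.mem_filter.1 hj).2)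
    calc ∑ j ∈ s.filter (fun j => f j ≤ W), g j
        ≤ ((s.filter (fun j => f j ≤ W)).card : ℝ) * dmin ^ (-k) := by
          simpa using Finset.sum_le_card_nsmul _ _ _ hterm
    _ ≤ (N * (M * ((W + W)^3 * v))) * dmin ^ (-k) :=
        mul_le_mul_of_nonneg_right hcard (Real.rpow_nonneg hd0.le _)
    _ = (N : ℝ) * (8 * (v * (M * (W^3 * dmin ^ (-k))))) := by ring
  -- Part 3 : far points
  have hpart3 : ∑ j ∈ s'.filter (fun j => ¬ f j ≤ 2^n * W), g j ≤
      (N : ℝ) * M ^ (k/3) := by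
    have hterm : ∀ j ∈ s'.filter (fun j => ¬ f j ≤ 2^n * W), g j ≤ R ^ (-k) := by
      intro j hj
      have h1 : 2^n * W < f j := not_le.1 (Finset.mem_filter.1 hj).2
      exact Real.rpow_le_rpow_of_nonpos hR0 (hnspec.trans h1.le) (neg_nonpos.2 hk0)
    have hcard : ((s'.filter (fun j => ¬ f j ≤ 2^n * W)).card : ℝ) ≤ N := by
      have : (s'.filter (fun j => ¬ f j ≤ 2^n * W)).card ≤ N := by
        calc (s'.filter (fun j => ¬ f j ≤ 2^n * W)).card
            ≤ (Finset.univ : Finset (Fin N)).card := Finset.card_le_card (Finset.subset_univ _)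
        _ = N := Finset.card_fin N
      exact_mod_cast this
    calc ∑ j ∈ s'.filter (fun j => ¬ f j ≤ 2^n * W), g j
        ≤ ((s'.filter (fun j => ¬ f j ≤ 2^n * W)).card : ℝ) * R ^ (-k) := by
          simpa using Finset.sum_le_card_nsmul _ _ _ hterm
    _ ≤ (N : ℝ) * R ^ (-k) :=
        mul_le_mul_of_nonneg_right hcard (Real.rpow_nonneg hR0.le _)
    _ = (N : ℝ) * M ^ (k/3) := by rw [hRk]
  -- Part 2 : dyadic shells
  set mid : Finset (Fin N) := s'.filter (fun j => f j ≤ 2^n * W) with hmid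
  set shell : ℕ → Finset (Fin N) :=
    fun m => mid.filter (fun j => 2^m * W < f j ∧ f j ≤ 2^(m+1) * W) with hshell
  have hmid_eq : mid = (Finset.range n).biUnion shell := by
    apply Finset.Subset.antisymm
    · intro j hj
      have hjmem := Finset.mem_filter.1 hj
      have hjW : W < f j := not_le.1 (Finset.mem_filter.1 hjmem.1).2
      have hj2n : f j ≤ 2^n * W := hjmem.2
      have hmain : ∃ m, m < n ∧ (2:ℝ)^m * W < f j ∧ f j ≤ 2^(m+1) * W := by
        by_contra hcon
        push_neg at hcon
        have hind : ∀ m, m ≤ n → (2:ℝ)^m * W < f j := by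
          intro m
          induction m with
          | zero => intro _; simpa using hjW
          | succ p ih =>
            intro hpn
            have hp := ih (by omega)
            exact hcon p (by omega) hp
        exact absurd hj2n (not_le.2 (hind n le_rfl))
      obtain ⟨m, hmn, hmspec, hmub⟩ := hmain
      refine Finset.mem_biUnion.2 ⟨m, Finset.mem_range.2 hmn, ?_⟩
      exact Finset.mem_filter.2 ⟨hj, hmspec, hmub⟩
    · exact Finset.biUnion_subset.2 fun m _ => Finset.filter_subset _ _
  have hdisj : (↑(Finset.range n) : Set ℕ).PairwiseDisjoint shell := by
    have key : ∀ a b : ℕ, a < b → Disjoint (shell a) (shell b) := by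
      intro a b hab
      rw [Finset.disjoint_left]
      intro j hja hjb
      have h1 : f j ≤ 2^(a+1) * W := (Finset.mem_filter.1 hja).2.2
      have h2 : (2:ℝ)^b * W < f j := (Finset.mem_filter.1 hjb).2.1
      have h3 : (2:ℝ)^(a+1) ≤ (2:ℝ)^b := pow_le_pow_right₀ one_le_two (by omega)
      nlinarith
    intro a _ b _ hab
    rcases lt_or_gt_of_ne hab with h | h
    · exact key a b h
    · exact (key b a h).symm
  have hshell_bound : ∀ m : ℕ, ∑ j ∈ shell m, g j ≤
      64 * ((N:ℝ) * (M * v)) * ((2:ℝ)^m * W) ^ ((3:ℝ) - k) := by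
    intro m
    set a : ℝ := (2:ℝ)^m * W with ha
    have ha0 : 0 < a := by positivity
    have hterm : ∀ j ∈ shell m, g j ≤ a ^ (-k) := by
      intro j hj
      have h1 : a < f j := (Finset.mem_filter.1 hj).2.1
      exact Real.rpow_le_rpow_of_nonpos ha0 h1.le (neg_nonpos.2 hk0)
    have hsub : shell m ⊆ s.filter (fun j => f j ≤ 2^(m+1) * W) := by
      intro j hj
      have hjm := Finset.mem_filter.1 hj
      have hjs : j ∈ s := (Finset.mem_filter.1 ((Finset.mem_filter.1 hjm.1).1)).1
      exact Finset.mem_filter.2 ⟨hjs, hjm.2.2⟩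
    have hcard : ((shell m).card : ℝ) ≤ N * (M * ((2^(m+1) * W + W)^3 * v)) := by
      refine le_trans ?_ (hcount (2^(m+1) * W) (by positivity) _
        (Finset.filter_subset _ _) (fun j hj => (Finset.mem_filter.1 hj).2))
      exact_mod_cast Nat.cast_le.2 (Finset.card_le_card hsub)
    have hvol : ((2:ℝ)^(m+1) * W + W)^3 ≤ 64 * a^(3:ℕ) := by
      have h1 : (2:ℝ)^(m+1) * W + W ≤ 4 * a := by
        have hWa : W ≤ a := by
          have : (1:ℝ) ≤ 2^m := one_le_pow₀ one_le_two
          nlinarith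
        have : (2:ℝ)^(m+1) * W = 2 * a := by rw [pow_succ]; ring
        linarith
      calc ((2:ℝ)^(m+1) * W + W)^3 ≤ (4*a)^3 :=
        pow_le_pow_left₀ (by positivity) h1 3
      _ = 64 * a^(3:ℕ) := by ring
    have hak : a^(3:ℕ) * a^(-k) = a ^ ((3:ℝ) - k) := by
      rw [← Real.rpow_natCast a 3, ← Real.rpow_add ha0,
        show ((3:ℕ):ℝ) + -k = (3:ℝ) - k by push_cast; ring]
    calc ∑ j ∈ shell m, g j
        ≤ ((shell m).card : ℝ) * a ^ (-k) := by
          simpa using Finset.sum_le_card_nsmul _ _ _ hterm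
    _ ≤ (N * (M * ((2^(m+1) * W + W)^3 * v))) * a ^ (-k) :=
        mul_le_mul_of_nonneg_right hcard (Real.rpow_nonneg ha0.le _)
    _ ≤ (N * (M * ((64 * a^(3:ℕ)) * v))) * a ^ (-k) := by
        have h8 : M * ((2^(m+1)*W + W)^3 * v) ≤ M * ((64 * a^(3:ℕ)) * v) :=
          mul_le_mul_of_nonneg_left (mul_le_mul_of_nonneg_right hvol hv0) hM.le
        have h9 := mul_le_mul_of_nonneg_left h8 hN0.le
        exact mul_le_mul_of_nonneg_right h9 (Real.rpow_nonneg ha0.le _)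
    _ = 64 * ((N:ℝ) * (M * v)) * (a^(3:ℕ) * a^(-k)) := by ring
    _ = 64 * ((N:ℝ) * (M * v)) * a ^ ((3:ℝ) - k) := by rw [hak]
  have hpart2 : ∑ j ∈ mid, g j ≤ (N:ℝ) * (512 * (v * M ^ (k/3))) := by
    have h1 : ∑ j ∈ mid, g j = ∑ m ∈ Finset.range n, ∑ j ∈ shell m, g j := by
      rw [hmid_eq, Finset.sum_biUnion hdisj]
    have h2 : ∑ m ∈ Finset.range n, ∑ j ∈ shell m, g j ≤
        ∑ m ∈ Finset.range n, 64 * ((N:ℝ) * (M * v)) * ((2:ℝ)^m * W) ^ ((3:ℝ) - k) :=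
      Finset.sum_le_sum fun m _ => hshell_bound m
    have h3 : ∑ m ∈ Finset.range n, 64 * ((N:ℝ) * (M * v)) * ((2:ℝ)^m * W) ^ ((3:ℝ) - k)
        = 64 * ((N:ℝ) * (M * v)) * ∑ m ∈ Finset.range n, ((2:ℝ)^m * W) ^ ((3:ℝ) - k) := by
      rw [Finset.mul_sum]
    have hq : (1:ℝ) ≤ 3 - k := by linarith
    have h4 : ∑ m ∈ Finset.range n, ((2:ℝ)^m * W) ^ ((3:ℝ) - k) ≤
        ((2:ℝ)^n * W) ^ ((3:ℝ) - k) := geom_rpow_sum_le hW hq n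
    have h5 : ((2:ℝ)^n * W) ^ ((3:ℝ) - k) ≤ 8 * R ^ ((3:ℝ) - k) := by
      calc ((2:ℝ)^n * W) ^ ((3:ℝ) - k) ≤ (2 * R) ^ ((3:ℝ) - k) :=
        Real.rpow_le_rpow (by positivity) h2n (by linarith)
      _ = 2 ^ ((3:ℝ) - k) * R ^ ((3:ℝ) - k) :=
        Real.mul_rpow (by norm_num) hR0.le
      _ ≤ 8 * R ^ ((3:ℝ) - k) := by
        have h6 : (2:ℝ) ^ ((3:ℝ) - k) ≤ 2 ^ (3:ℝ) :=
          Real.rpow_le_rpow_of_exponent_le one_le_two (by linarith)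
        have h7 : (2:ℝ) ^ (3:ℝ) = 8 := by
          rw [show (3:ℝ) = ((3:ℕ):ℝ) by norm_num, Real.rpow_natCast]; norm_num
        have h8 := Real.rpow_nonneg hR0.le ((3:ℝ) - k)
        exact mul_le_mul_of_nonneg_right (h7 ▸ h6) h8
    have hmain : ∑ j ∈ mid, g j ≤ 64 * ((N:ℝ) * (M * v)) * (8 * R ^ ((3:ℝ) - k)) := by
      rw [h1]
      refine h2.trans (le_of_eq h3 |>.trans ?_)
      have hc : (0:ℝ) ≤ 64 * ((N:ℝ) * (M * v)) := by positivity
      exact mul_le_mul_of_nonneg_left (h4.trans h5) hc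
    calc ∑ j ∈ mid, g j ≤ 64 * ((N:ℝ) * (M * v)) * (8 * R ^ ((3:ℝ) - k)) := hmain
    _ = (N:ℝ) * (512 * (v * (M * R ^ ((3:ℝ) - k)))) := by ring
    _ = (N:ℝ) * (512 * (v * M ^ (k/3))) := by rw [hMR]
  -- assemble
  have htotal : ∑ j ∈ s, g j ≤
      (N:ℝ) * (8 * (v * (M * (W^3 * dmin ^ (-k)))) + 512 * (v * M ^ (k/3)) + M ^ (k/3)) := by
    rw [hsplit1, hsplit2]
    have := add_le_add (add_le_add hpart1 hpart2) hpart3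
    calc ∑ j ∈ s.filter (fun j => f j ≤ W), g j + (∑ j ∈ mid, g j +
          ∑ j ∈ s'.filter (fun j => ¬ f j ≤ 2^n * W), g j)
        = ∑ j ∈ s.filter (fun j => f j ≤ W), g j + ∑ j ∈ mid, g j +
          ∑ j ∈ s'.filter (fun j => ¬ f j ≤ 2^n * W), g j := by ring
    _ ≤ (N:ℝ) * (8 * (v * (M * (W^3 * dmin ^ (-k))))) + (N:ℝ) * (512 * (v * M ^ (k/3)))
          + (N:ℝ) * M ^ (k/3) := this
    _ = (N:ℝ) * (8 * (v * (M * (W^3 * dmin ^ (-k)))) + 512 * (v * M ^ (k/3)) + M ^ (k/3)) := by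
          ring
  rw [inv_mul_le_iff₀ hN0]
  refine htotal.trans ?_
  apply mul_le_mul_of_nonneg_left _ hN0.le
  have hd : (0:ℝ) ≤ M * W^3 * dmin ^ (-k) := by
    have := Real.rpow_nonneg hd0.le (-k); positivity
  have hMk : (0:ℝ) ≤ M ^ (k/3) := Real.rpow_nonneg hM.le _
  have hdk : (0:ℝ) ≤ dmin ^ (-k) := Real.rpow_nonneg hd0.le _
  have e1 : 8 * (v * (M * (W^3 * dmin ^ (-k)))) = 8 * (v * (M * W^3 * dmin ^ (-k))) := by ring
  have e2 : 1000 * (v + 1) * (M * W^3 * dmin ^ (-k) + M ^ (k/3))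
      = 1000 * (v * (M * W^3 * dmin ^ (-k))) + 1000 * (M * W^3 * dmin ^ (-k))
        + 1000 * (v * M ^ (k/3)) + 1000 * M ^ (k/3) := by ring
  have hvX : (0:ℝ) ≤ v * (M * W^3 * dmin ^ (-k)) := mul_nonneg hv0 hd
  have hvY : (0:ℝ) ≤ v * M ^ (k/3) := mul_nonneg hv0 hMk
  linarith
end

section
/- There exists a universal constant C > 0 such that the following holds. Assume in addition that 27·M·W³ ≤ 1 (equivalently 3W ≤ M^{−1/3}). Then for every index i ∈ {1,…,N}: (1/N)·∑_{j≠i} ‖x_i − x_j‖^{−3} ≤ C·M·(W³·d_min^{−3} + |log(M^{1/3}·W)| + 1). -/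
open MeasureTheory
open scoped ENNReal NNReal

lemma vol_cb_le (c : E3) (ρ : ℝ) (hρ : 0 ≤ ρ) :
    volume (Metric.closedBall c ρ) ≤ ENNReal.ofReal (8 * ρ ^ 3) := by
  rw [EuclideanSpace.volume_closedBall]
  have hcard : Fintype.card (Fin 3) = 3 := by simp
  rw [hcard]
  have hG : Real.Gamma ((3 : ℝ) / 2 + 1) = 3 / 4 * Real.sqrt Real.pi := by
    rw [Real.Gamma_add_one (by norm_num)]
    have : (3 : ℝ) / 2 = 1 / 2 + 1 := by norm_num
    rw [this, Real.Gamma_add_one (by norm_num), Real.Gamma_one_half_eq]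
    ring
  have h3 : ((3 : ℕ) : ℝ) / 2 + 1 = (3 : ℝ) / 2 + 1 := by norm_num
  rw [show (Real.sqrt Real.pi ^ 3 / Real.Gamma ((3:ℕ) / 2 + 1)) = 4 / 3 * Real.pi by
      rw [h3, hG]
      have hs : Real.sqrt Real.pi ^ 3 = Real.pi * Real.sqrt Real.pi := by
        nlinarith [Real.sq_sqrt Real.pi_nonneg, Real.sqrt_nonneg Real.pi]
      rw [hs]
      field_simp]
  rw [← ENNReal.ofReal_pow hρ, ← ENNReal.ofReal_mul (by positivity)]
  apply ENNReal.ofReal_le_ofReal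
  nlinarith [Real.pi_le_four, pow_nonneg hρ 3]

lemma count_le {N : ℕ} (M W : ℝ) (μ : Measure E3) (T : E3 → E3) (x : Fin N → E3)
    (hM : 0 < M) (hW : 0 < W)
    (hden : ∀ A : Set E3, μ A ≤ ENNReal.ofReal M * volume A)
    (hT : Measurable T)
    (hWae : ∀ᵐ y ∂μ, ‖T y - y‖ ≤ W)
    (hmap : μ.map T = (N : ℝ≥0∞)⁻¹ • ∑ j : Fin N, Measure.dirac (x j))
    (hN : 0 < N) (i : Fin N) (r : ℝ) (hr : 0 ≤ r) :
    ((Finset.univ.filter (fun j => ‖x j - x i‖ ≤ r)).card : ℝ)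
      ≤ N * (M * (8 * (r + W) ^ 3)) := by
  set B := Metric.closedBall (x i) r with hB
  have hmemB : ∀ j, x j ∈ B ↔ ‖x j - x i‖ ≤ r := by
    intro j; rw [hB, Metric.mem_closedBall, dist_eq_norm]
  have h1 : μ.map T B
      = (N : ℝ≥0∞)⁻¹ * ((Finset.univ.filter (fun j => ‖x j - x i‖ ≤ r)).card : ℝ≥0∞) := by
    rw [hmap]
    rw [Measure.smul_apply, smul_eq_mul]
    congr 1
    rw [Measure.finset_sum_apply]
    rw [Finset.sum_congr rfl (fun j _ => Measure.dirac_apply' (x j) measurableSet_closedBall)]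
    classical
    simp only [Set.indicator_apply, Pi.one_apply, Metric.mem_closedBall, dist_eq_norm]
    rw [Finset.sum_boole]
  have h2 : μ.map T B = μ (T ⁻¹' B) :=
    Measure.map_apply hT measurableSet_closedBall
  have h3 : μ (T ⁻¹' B) ≤ μ (Metric.closedBall (x i) (r + W)) := by
    apply measure_mono_ae
    filter_upwards [hWae] with y hy hyB
    show y ∈ Metric.closedBall (x i) (r + W)
    rw [Metric.mem_closedBall, dist_eq_norm]
    have h1 : ‖T y - x i‖ ≤ r := by
      have : T y ∈ Metric.closedBall (x i) r := hyB
      rwa [Metric.mem_closedBall, dist_eq_norm] at this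
    calc ‖y - x i‖ = ‖(y - T y) + (T y - x i)‖ := by rw [sub_add_sub_cancel]
      _ ≤ ‖y - T y‖ + ‖T y - x i‖ := norm_add_le _ _
      _ ≤ W + r := by
          have : ‖y - T y‖ = ‖T y - y‖ := by rw [norm_sub_rev]
          rw [this]; exact add_le_add hy h1
      _ = r + W := by ring
  have h4 : μ (Metric.closedBall (x i) (r + W))
      ≤ ENNReal.ofReal M * ENNReal.ofReal (8 * (r + W) ^ 3) := by
    refine le_trans (hden _) ?_
    exact mul_le_mul_right (vol_cb_le (x i) (r + W) (by positivity)) _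
  have key : (N : ℝ≥0∞)⁻¹ * ((Finset.univ.filter (fun j => ‖x j - x i‖ ≤ r)).card : ℝ≥0∞)
      ≤ ENNReal.ofReal (M * (8 * (r + W) ^ 3)) := by
    rw [← h1, h2, ENNReal.ofReal_mul hM.le]
    exact le_trans h3 h4
  have hNne : (N : ℝ≥0∞) ≠ 0 := Nat.cast_ne_zero.mpr (by omega)
  have key2 : ((Finset.univ.filter (fun j => ‖x j - x i‖ ≤ r)).card : ℝ≥0∞)
      ≤ (N : ℝ≥0∞) * ENNReal.ofReal (M * (8 * (r + W) ^ 3)) := by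
    rw [← ENNReal.inv_mul_le_iff hNne (ENNReal.natCast_ne_top N)]
    exact key
  have := ENNReal.toReal_mono (by
      exact ENNReal.mul_ne_top (ENNReal.natCast_ne_top N) ENNReal.ofReal_ne_top) key2
  rw [ENNReal.toReal_mul, ENNReal.toReal_ofReal (by positivity)] at this
  simpa using this


set_option maxHeartbeats 2000000 in
/-- there is a universal constant `C > 0` such that for any `N ≥ 2`,
`M, W > 0`, any probability measure `μ` on `ℝ³` with density bounded by `M`, any
measurable transport map `T` with `‖T(y) − y‖ ≤ W` μ-a.e. pushing `μ` to the empirical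
measure of points `x₁, …, x_N` whose minimal pairwise distance `d_min` is positive, if
`27 M W³ ≤ 1` then for every `i`,
`(1/N) ∑_{j≠i} ‖x_i − x_j‖^{−3} ≤ C M (W³ d_min^{−3} + |log(M^{1/3} W)| + 1)`. -/
theorem discrete_sum_inv_dist_cube_le :
    ∃ C : ℝ, 0 < C ∧
      ∀ (N : ℕ) (M W : ℝ) (μ : Measure E3) (T : E3 → E3) (x : Fin N → E3) (dmin : ℝ),
        2 ≤ N → 0 < M → 0 < W →
        IsProbabilityMeasure μ →
        (∀ A : Set E3, μ A ≤ ENNReal.ofReal M * volume A) →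
        Measurable T →
        (∀ᵐ y ∂μ, ‖T y - y‖ ≤ W) →
        μ.map T = (N : ℝ≥0∞)⁻¹ • ∑ j : Fin N, Measure.dirac (x j) →
        dmin = sInf {d : ℝ | ∃ i j : Fin N, i ≠ j ∧ d = ‖x i - x j‖} →
        0 < dmin →
        27 * M * W ^ 3 ≤ 1 →
        ∀ i : Fin N,
          (N : ℝ)⁻¹ * ∑ j ∈ Finset.univ.filter (fun j => j ≠ i), (‖x i - x j‖ ^ 3)⁻¹
            ≤ C * M * (W ^ 3 / dmin ^ 3 + |Real.log (M ^ ((1 : ℝ) / 3) * W)| + 1) := by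
  refine ⟨1000, by norm_num, ?_⟩
  intro N M W μ T x dmin hN2 hM hW hprob hden hT hWae hmap hdmin hdpos h27 i
  have hN : 0 < N := by omega
  have hNR : (0:ℝ) < N := by positivity
  have hcnt := count_le M W μ T x hM hW hden hT hWae hmap hN i
  clear hden hT hWae hmap hprob h27
  -- dmin is a lower bound for pairwise distances
  have hdle : ∀ j : Fin N, j ≠ i → dmin ≤ ‖x i - x j‖ := by
    intro j hj
    rw [hdmin]
    apply csInf_le
    · exact ⟨0, fun z hz => by obtain ⟨a, b, hab, hz⟩ := hz; rw [hz]; exact norm_nonneg _⟩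
    · exact ⟨i, j, Ne.symm hj, rfl⟩
  set R : ℝ := (M ^ ((1:ℝ)/3))⁻¹ with hR
  have hMp : (0:ℝ) < M ^ ((1:ℝ)/3) := Real.rpow_pos_of_pos hM _
  have hRpos : 0 < R := by positivity
  have hR3 : R ^ 3 = M⁻¹ := by
    rw [hR, inv_pow, ← Real.rpow_natCast (M ^ ((1:ℝ)/3)) 3, ← Real.rpow_mul hM.le]
    norm_num
  set L := |Real.log (M ^ ((1:ℝ)/3) * W)| with hL
  have hLnn : 0 ≤ L := abs_nonneg _
  have hWd : (0:ℝ) ≤ W ^ 3 / dmin ^ 3 := by positivity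
  set K : ℕ := ⌊Real.logb 2 (R / dmin)⌋₊ + 1 with hK
  -- bound on K
  have hKle : (K : ℝ) ≤ 2 * (L + W ^ 3 / dmin ^ 3) + 1 := by
    have hlog : Real.log (R / dmin) ≤ L + W ^ 3 / dmin ^ 3 := by
      have hRd : R / dmin = (M ^ ((1:ℝ)/3) * W)⁻¹ * (W / dmin) := by
        rw [hR]; field_simp
      rw [hRd, Real.log_mul (by positivity) (by positivity), Real.log_inv]
      have h1 : -Real.log (M ^ ((1:ℝ)/3) * W) ≤ L := neg_le_abs _
      have h2 : Real.log (W / dmin) ≤ W ^ 3 / dmin ^ 3 := by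
        have ht : (0:ℝ) < W / dmin := by positivity
        have h3 : Real.log ((W/dmin) ^ 3) ≤ (W/dmin) ^ 3 - 1 :=
          Real.log_le_sub_one_of_pos (by positivity)
        rw [Real.log_pow] at h3
        have h4 : (W/dmin) ^ 3 = W ^ 3 / dmin ^ 3 := div_pow W dmin 3
        rw [h4] at h3
        push_cast at h3
        nlinarith [hWd]
      linarith
    rcases le_or_gt (Real.logb 2 (R / dmin)) 0 with h | h
    · have h0 : ⌊Real.logb 2 (R / dmin)⌋₊ = 0 :=
        Nat.floor_eq_zero.mpr (lt_of_le_of_lt h one_pos)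
      rw [hK, h0]
      push_cast
      nlinarith [hLnn, hWd]
    · have hfl : (⌊Real.logb 2 (R / dmin)⌋₊ : ℝ) ≤ Real.logb 2 (R / dmin) :=
        Nat.floor_le h.le
      have hl2 : (0:ℝ) < Real.log 2 := Real.log_pos one_lt_two
      have hlogpos : 0 < Real.log (R/dmin) := by
        have h5 := mul_pos h hl2
        rwa [Real.logb, div_mul_cancel₀ _ hl2.ne'] at h5
      have hlb : Real.logb 2 (R/dmin) ≤ 2 * Real.log (R/dmin) := by
        rw [Real.logb, div_le_iff₀ hl2]
        nlinarith [Real.log_two_gt_d9]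
      rw [hK]
      push_cast
      nlinarith [hlog, hfl, hlb, hLnn, hWd]
  -- annuli
  set A : ℕ → Finset (Fin N) := fun k =>
    Finset.univ.filter (fun j => j ≠ i ∧ 2 ^ k * dmin ≤ ‖x i - x j‖ ∧
      ‖x i - x j‖ < 2 ^ (k+1) * dmin) with hA
  set F := Finset.univ.filter (fun j : Fin N => j ≠ i) with hF
  set f : Fin N → ℝ := fun j => (‖x i - x j‖ ^ 3)⁻¹ with hf
  have hfnn : ∀ j, 0 ≤ f j := fun j => by positivity
  -- subset of biUnion
  have hsub : F.filter (fun j => ‖x i - x j‖ ≤ R) ⊆ (Finset.range K).biUnion A := by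
    intro j hj
    rw [Finset.mem_filter] at hj
    obtain ⟨hjF, hjR⟩ := hj
    rw [hF, Finset.mem_filter] at hjF
    have hji : j ≠ i := hjF.2
    have hd : dmin ≤ ‖x i - x j‖ := hdle j hji
    set q : ℝ := ‖x i - x j‖ / dmin with hq
    have hq1 : 1 ≤ q := (one_le_div hdpos).mpr hd
    have hq0 : 0 < q := lt_of_lt_of_le one_pos hq1
    have hlb0 : 0 ≤ Real.logb 2 q := Real.logb_nonneg one_lt_two hq1
    set k : ℕ := ⌊Real.logb 2 q⌋₊ with hk
    rw [Finset.mem_biUnion]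
    have hqe : ‖x i - x j‖ = q * dmin := by
      rw [hq, div_mul_cancel₀ _ hdpos.ne']
    refine ⟨k, ?_, ?_⟩
    · rw [Finset.mem_range, hK]
      have hqR : q ≤ R / dmin := by
        rw [hq]
        gcongr
      have h1 : Real.logb 2 q ≤ Real.logb 2 (R / dmin) :=
        Real.logb_le_logb_of_le one_lt_two hq0 hqR
      have := Nat.floor_le_floor h1
      omega
    · rw [hA]
      simp only [Finset.mem_filter, Finset.mem_univ, true_and]
      refine ⟨hji, ?_, ?_⟩
      · have h2 : (2:ℝ) ^ (k:ℝ) ≤ q := by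
          conv_rhs => rw [← Real.rpow_logb (show (0:ℝ) < 2 by norm_num)
            (show (2:ℝ) ≠ 1 by norm_num) hq0]
          exact Real.rpow_le_rpow_of_exponent_le one_le_two (Nat.floor_le hlb0)
        rw [Real.rpow_natCast] at h2
        rw [hqe]
        nlinarith
      · have h3 : q < (2:ℝ) ^ (((k+1 : ℕ)):ℝ) := by
          conv_lhs => rw [← Real.rpow_logb (show (0:ℝ) < 2 by norm_num)
            (show (2:ℝ) ≠ 1 by norm_num) hq0]
          apply Real.rpow_lt_rpow_of_exponent_lt one_lt_two
          push_cast
          exact Nat.lt_floor_add_one _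
        rw [Real.rpow_natCast] at h3
        rw [hqe]
        nlinarith
  -- disjointness
  have hdisj : (Finset.range K : Set ℕ).PairwiseDisjoint A := by
    intro a _ b _ hab
    apply Finset.disjoint_left.mpr
    intro j hja hjb
    rw [hA] at hja hjb
    simp only [Finset.mem_filter, Finset.mem_univ, true_and] at hja hjb
    rcases Nat.lt_or_ge a b with hcase | hcase
    · have hpow : (2:ℝ) ^ (a+1) ≤ 2 ^ b := pow_le_pow_right₀ one_le_two hcase
      have h6 : (2:ℝ) ^ (a+1) * dmin ≤ 2 ^ b * dmin :=
        mul_le_mul_of_nonneg_right hpow hdpos.le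
      linarith [hja.2.2, hjb.2.1]
    · have hba : b + 1 ≤ a := by omega
      have hpow : (2:ℝ) ^ (b+1) ≤ 2 ^ a := pow_le_pow_right₀ one_le_two hba
      have h6 : (2:ℝ) ^ (b+1) * dmin ≤ 2 ^ a * dmin :=
        mul_le_mul_of_nonneg_right hpow hdpos.le
      linarith [hjb.2.2, hja.2.1]
  -- per-annulus bound
  have hannulus : ∀ k, ∑ j ∈ A k, f j
      ≤ N * M * 256 + N * M * 32 * (W ^ 3 / dmin ^ 3) * (1/8 : ℝ) ^ k := by
    intro k
    set a : ℝ := 2 ^ k * dmin with haa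
    have ha : (0:ℝ) < a := by positivity
    have ha3 : (0:ℝ) < a ^ 3 := by positivity
    have hterm : ∀ j ∈ A k, f j ≤ (a ^ 3)⁻¹ := by
      intro j hj
      rw [hA] at hj
      simp only [Finset.mem_filter, Finset.mem_univ, true_and] at hj
      have h1 : a ≤ ‖x i - x j‖ := hj.2.1
      show (‖x i - x j‖ ^ 3)⁻¹ ≤ (a ^ 3)⁻¹
      exact inv_anti₀ ha3 (pow_le_pow_left₀ ha.le h1 3)
    have hcard : ((A k).card : ℝ) ≤ N * (M * (8 * (2 ^ (k+1) * dmin + W) ^ 3)) := by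
      refine le_trans ?_ (hcnt (2 ^ (k+1) * dmin) (by positivity))
      have hsub2 : A k ⊆ Finset.univ.filter (fun j => ‖x j - x i‖ ≤ 2 ^ (k+1) * dmin) := by
        intro j hj
        rw [hA] at hj
        simp only [Finset.mem_filter, Finset.mem_univ, true_and] at hj ⊢
        rw [norm_sub_rev]
        exact le_of_lt hj.2.2
      exact_mod_cast Nat.cast_le.mpr (Finset.card_le_card hsub2)
    have h2k1 : (2:ℝ) ^ (k+1) * dmin = 2 * a := by rw [haa]; ring
    have hcube : (2*a + W) ^ 3 ≤ 32 * a ^ 3 + 4 * W ^ 3 := by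
      nlinarith [sq_nonneg (2*a - W), ha.le, hW.le, mul_pos ha hW]
    have ha3e : a ^ 3 = 8 ^ k * dmin ^ 3 := by
      rw [haa, mul_pow, ← pow_mul, mul_comm k 3, pow_mul]
      norm_num
    have h8 : (8:ℝ) ^ k ≠ 0 := by positivity
    have hinv : (W ^ 3 / dmin ^ 3) * (1/8:ℝ) ^ k = W ^ 3 * (a ^ 3)⁻¹ := by
      rw [ha3e]
      field_simp
      ring
      rw [← mul_pow]; norm_num
    have step : (2*a + W) ^ 3 * (a ^ 3)⁻¹ ≤ 32 + 4 * (W ^ 3 * (a ^ 3)⁻¹) := by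
      have hmul := mul_le_mul_of_nonneg_right hcube (inv_pos.mpr ha3).le
      have he : (32 * a ^ 3 + 4 * W ^ 3) * (a ^ 3)⁻¹ = 32 + 4 * (W ^ 3 * (a ^ 3)⁻¹) := by
        field_simp
      linarith [hmul, he.le, he.ge]
    calc ∑ j ∈ A k, f j ≤ (A k).card • (a ^ 3)⁻¹ := Finset.sum_le_card_nsmul _ _ _ hterm
      _ = ((A k).card : ℝ) * (a ^ 3)⁻¹ := by rw [nsmul_eq_mul]
      _ ≤ (N * (M * (8 * (2 ^ (k+1) * dmin + W) ^ 3))) * (a ^ 3)⁻¹ :=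
          mul_le_mul_of_nonneg_right hcard (inv_pos.mpr ha3).le
      _ ≤ N * M * 256 + N * M * 32 * (W ^ 3 / dmin ^ 3) * (1/8 : ℝ) ^ k := by
          rw [h2k1]
          calc (N : ℝ) * (M * (8 * (2 * a + W) ^ 3)) * (a ^ 3)⁻¹
              = N * M * 8 * ((2 * a + W) ^ 3 * (a ^ 3)⁻¹) := by ring
            _ ≤ N * M * 8 * (32 + 4 * (W ^ 3 * (a ^ 3)⁻¹)) :=
                mul_le_mul_of_nonneg_left step (by positivity)
            _ = N * M * 256 + N * M * 32 * ((W ^ 3 / dmin ^ 3) * (1/8 : ℝ) ^ k) := by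
                rw [hinv]; ring
            _ = N * M * 256 + N * M * 32 * (W ^ 3 / dmin ^ 3) * (1/8 : ℝ) ^ k := by ring
  -- geometric sum
  have hgeom : ∑ k ∈ Finset.range K, ((1:ℝ)/8) ^ k ≤ 2 := by
    have h := geom_sum_eq (by norm_num : (1/8:ℝ) ≠ 1) K
    rw [h]
    have h1 : (0:ℝ) ≤ (1/8:ℝ) ^ K := by positivity
    have h2 : ((1/8:ℝ)) ^ K ≤ 1 := pow_le_one₀ (by norm_num) (by norm_num)
    rw [div_le_iff_of_neg (by norm_num : (1/8:ℝ) - 1 < 0)]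
    nlinarith
  -- main part
  have hmain : ∑ j ∈ F.filter (fun j => ‖x i - x j‖ ≤ R), f j
      ≤ N * M * 256 * K + N * M * 64 * (W ^ 3 / dmin ^ 3) := by
    calc ∑ j ∈ F.filter (fun j => ‖x i - x j‖ ≤ R), f j
        ≤ ∑ j ∈ (Finset.range K).biUnion A, f j :=
          Finset.sum_le_sum_of_subset_of_nonneg hsub (fun j _ _ => hfnn j)
      _ = ∑ k ∈ Finset.range K, ∑ j ∈ A k, f j := Finset.sum_biUnion hdisj
      _ ≤ ∑ k ∈ Finset.range K,
            (N * M * 256 + N * M * 32 * (W ^ 3 / dmin ^ 3) * (1/8 : ℝ) ^ k) :=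
          Finset.sum_le_sum (fun k _ => hannulus k)
      _ ≤ N * M * 256 * K + N * M * 64 * (W ^ 3 / dmin ^ 3) := by
          rw [Finset.sum_add_distrib, Finset.sum_const, Finset.card_range, nsmul_eq_mul,
            ← Finset.mul_sum]
          have h2 : N * M * 32 * (W ^ 3 / dmin ^ 3) * ∑ k ∈ Finset.range K, ((1:ℝ)/8) ^ k
              ≤ N * M * 32 * (W ^ 3 / dmin ^ 3) * 2 :=
            mul_le_mul_of_nonneg_left hgeom (by positivity)
          nlinarith
  -- tail part
  have htail : ∑ j ∈ F.filter (fun j => ¬ ‖x i - x j‖ ≤ R), f j ≤ N * M := by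
    have hterm : ∀ j ∈ F.filter (fun j => ¬ ‖x i - x j‖ ≤ R), f j ≤ M := by
      intro j hj
      rw [Finset.mem_filter] at hj
      have hRlt : R ≤ ‖x i - x j‖ := (lt_of_not_ge hj.2).le
      have h5 : R ^ 3 ≤ ‖x i - x j‖ ^ 3 := pow_le_pow_left₀ hRpos.le hRlt 3
      show (‖x i - x j‖ ^ 3)⁻¹ ≤ M
      calc (‖x i - x j‖ ^ 3)⁻¹ ≤ (R ^ 3)⁻¹ :=
            inv_anti₀ (by positivity) h5
        _ = M := by rw [hR3, inv_inv]
    calc ∑ j ∈ F.filter (fun j => ¬ ‖x i - x j‖ ≤ R), f j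
        ≤ (F.filter (fun j => ¬ ‖x i - x j‖ ≤ R)).card • M :=
          Finset.sum_le_card_nsmul _ _ _ hterm
      _ = ((F.filter (fun j => ¬ ‖x i - x j‖ ≤ R)).card : ℝ) * M := by rw [nsmul_eq_mul]
      _ ≤ N * M := by
          have hc : (F.filter (fun j => ¬ ‖x i - x j‖ ≤ R)).card ≤ N := by
            refine le_trans (Finset.card_le_univ _) ?_
            simp
          exact mul_le_mul_of_nonneg_right (by exact_mod_cast hc) hM.le
  -- combine
  have hsplit : ∑ j ∈ F, f j
      = ∑ j ∈ F.filter (fun j => ‖x i - x j‖ ≤ R), f j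
        + ∑ j ∈ F.filter (fun j => ¬ ‖x i - x j‖ ≤ R), f j :=
    (Finset.sum_filter_add_sum_filter_not F _ f).symm
  have htotal : ∑ j ∈ F, f j ≤ N * (1000 * M * (W ^ 3 / dmin ^ 3 + L + 1)) := by
    rw [hsplit]
    have := add_le_add hmain htail
    refine le_trans this ?_
    have hKb : N * M * 256 * K ≤ N * M * 256 * (2 * (L + W ^ 3 / dmin ^ 3) + 1) :=
      mul_le_mul_of_nonneg_left hKle (by positivity)
    nlinarith [mul_pos hNR hM]
  rw [inv_mul_le_iff₀ hNR]
  exact htotal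
end

section
/- Let s < t be real numbers, x ∈ ℝ³, and let X₁, X₂ : [s,t] → ℝ³ be differentiable with X_i'(τ) = b(F_i(τ, X_i(τ))) + u(τ, X_i(τ)) for all τ ∈ [s,t] and X₁(t) = X₂(t) = x. Then for every τ ∈ [s,t]: ‖X₁(τ) − X₂(τ)‖ ≤ (L_b·∫_τ^t sup_{z∈ℝ³} ‖F₁(σ,z) − F₂(σ,z)‖ dσ)·exp((L_b·L_F + L_u)·(t − τ)); i.e., the backward characteristic flows associated with two correlation fields F₁ and F₂ differ at most by the time-integrated uniform distance between F₁ and F₂, up to an exponential Gronwall factor. -/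
set_option maxHeartbeats 1000000 in
/-- stability of backward characteristics with respect to the correlation
field. If `b` is `L_b`-Lipschitz, `F₁, F₂` are continuous, bounded and `L_F`-Lipschitz in
the space variable, `u` is continuous and `L_u`-Lipschitz in the space variable, and
`X₁, X₂ : [s,t] → ℝ³` solve `X_i'(τ) = b(F_i(τ, X_i(τ))) + u(τ, X_i(τ))` with the same
endpoint `X₁(t) = X₂(t) = x`, then for every `τ ∈ [s,t]`:
`‖X₁(τ) − X₂(τ)‖ ≤ (L_b ∫_τ^t sup_z ‖F₁(σ,z) − F₂(σ,z)‖ dσ) exp((L_b L_F + L_u)(t − τ))`. -/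
theorem backward_characteristics_stability
    (b : E3 → E3) (F₁ F₂ u : ℝ × E3 → E3) (Lb LF Lu : ℝ)
    (hLb : 0 ≤ Lb) (hLF : 0 ≤ LF) (hLu : 0 ≤ Lu)
    (hb : ∀ z z' : E3, ‖b z - b z'‖ ≤ Lb * ‖z - z'‖)
    (hF₁c : Continuous F₁) (hF₂c : Continuous F₂)
    (hF₁bdd : ∃ B : ℝ, ∀ p : ℝ × E3, ‖F₁ p‖ ≤ B)
    (hF₂bdd : ∃ B : ℝ, ∀ p : ℝ × E3, ‖F₂ p‖ ≤ B)
    (hF₁ : ∀ (σ : ℝ) (z z' : E3), ‖F₁ (σ, z) - F₁ (σ, z')‖ ≤ LF * ‖z - z'‖)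
    (hF₂ : ∀ (σ : ℝ) (z z' : E3), ‖F₂ (σ, z) - F₂ (σ, z')‖ ≤ LF * ‖z - z'‖)
    (huc : Continuous u)
    (hu : ∀ (σ : ℝ) (z z' : E3), ‖u (σ, z) - u (σ, z')‖ ≤ Lu * ‖z - z'‖)
    (s t : ℝ) (hst : s < t) (x : E3) (X₁ X₂ : ℝ → E3)
    (hX₁ : ∀ τ ∈ Set.Icc s t,
      HasDerivWithinAt X₁ (b (F₁ (τ, X₁ τ)) + u (τ, X₁ τ)) (Set.Icc s t) τ)
    (hX₂ : ∀ τ ∈ Set.Icc s t,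
      HasDerivWithinAt X₂ (b (F₂ (τ, X₂ τ)) + u (τ, X₂ τ)) (Set.Icc s t) τ)
    (hX₁t : X₁ t = x) (hX₂t : X₂ t = x) :
    ∀ τ ∈ Set.Icc s t,
      ‖X₁ τ - X₂ τ‖
        ≤ (Lb * ∫ σ in τ..t, ⨆ z : E3, ‖F₁ (σ, z) - F₂ (σ, z)‖) *
            Real.exp ((Lb * LF + Lu) * (t - τ)) := by
  classical
  obtain ⟨B₁, hB₁⟩ := hF₁bdd
  obtain ⟨B₂, hB₂⟩ := hF₂bdd
  -- the sup function
  set g : ℝ → ℝ := fun σ => ⨆ z : E3, ‖F₁ (σ, z) - F₂ (σ, z)‖ with hgdef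
  have hbdd : ∀ σ : ℝ, BddAbove (Set.range fun z : E3 => ‖F₁ (σ, z) - F₂ (σ, z)‖) := by
    intro σ
    refine ⟨B₁ + B₂, ?_⟩
    rintro _ ⟨z, rfl⟩
    exact (norm_sub_le _ _).trans (add_le_add (hB₁ _) (hB₂ _))
  have hgle : ∀ σ (z : E3), ‖F₁ (σ, z) - F₂ (σ, z)‖ ≤ g σ :=
    fun σ z => le_ciSup (hbdd σ) z
  have hgub : ∀ σ, g σ ≤ B₁ + B₂ := fun σ =>
    ciSup_le fun z => (norm_sub_le _ _).trans (add_le_add (hB₁ _) (hB₂ _))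
  have hgnn : ∀ σ, 0 ≤ g σ := fun σ => (norm_nonneg _).trans (hgle σ 0)
  -- measurability of g via a dense sequence
  have hgm : Measurable g := by
    set e : ℕ → E3 := TopologicalSpace.denseSeq E3 with he
    have hdr : DenseRange e := TopologicalSpace.denseRange_denseSeq E3
    have hrepr : g = fun σ => ⨆ n : ℕ, ‖F₁ (σ, e n) - F₂ (σ, e n)‖ := by
      funext σ
      apply le_antisymm
      · refine ciSup_le fun z => le_of_forall_pos_le_add fun η hη => ?_
        obtain ⟨n, hn⟩ := hdr.exists_dist_lt z (show (0:ℝ) < η / (2 * LF + 1) by positivity)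
        have hzn : ‖z - e n‖ = dist z (e n) := (dist_eq_norm _ _).symm
        have h1 : ‖F₁ (σ, z) - F₂ (σ, z)‖
            ≤ ‖F₁ (σ, e n) - F₂ (σ, e n)‖ + ‖(F₁ (σ, z) - F₁ (σ, e n)) - (F₂ (σ, z) - F₂ (σ, e n))‖ := by
          have : F₁ (σ, z) - F₂ (σ, z)
              = (F₁ (σ, e n) - F₂ (σ, e n)) + ((F₁ (σ, z) - F₁ (σ, e n)) - (F₂ (σ, z) - F₂ (σ, e n))) := by
            abel
          rw [this]; exact norm_add_le _ _
        have h2 : ‖(F₁ (σ, z) - F₁ (σ, e n)) - (F₂ (σ, z) - F₂ (σ, e n))‖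
            ≤ LF * ‖z - e n‖ + LF * ‖z - e n‖ :=
          (norm_sub_le _ _).trans (add_le_add (hF₁ _ _ _) (hF₂ _ _ _))
        have hne : ‖F₁ (σ, e n) - F₂ (σ, e n)‖ ≤ ⨆ n : ℕ, ‖F₁ (σ, e n) - F₂ (σ, e n)‖ := by
          refine le_ciSup (f := fun n : ℕ => ‖F₁ (σ, e n) - F₂ (σ, e n)‖) ⟨B₁ + B₂, ?_⟩ n
          rintro _ ⟨m, rfl⟩
          exact (norm_sub_le _ _).trans (add_le_add (hB₁ _) (hB₂ _))
        have h3 : LF * ‖z - e n‖ + LF * ‖z - e n‖ ≤ η := by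
          rw [hzn]
          have hd : dist z (e n) ≤ η / (2 * LF + 1) := hn.le
          have h4 : (2 * LF) * dist z (e n) ≤ (2 * LF + 1) * (η / (2 * LF + 1)) := by
            apply mul_le_mul (by linarith) hd dist_nonneg (by linarith)
          have h5 : (2 * LF + 1) * (η / (2 * LF + 1)) = η := by
            field_simp
          nlinarith [dist_nonneg (x := z) (y := e n)]
        linarith [h1, h2, h3, hne]
      · refine ciSup_le fun n => hgle σ (e n)
    rw [hrepr]
    refine Measurable.iSup fun n => Continuous.measurable ?_
    exact ((hF₁c.sub hF₂c).comp (continuous_id.prodMk continuous_const)).norm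
  have hgint : ∀ a c : ℝ, IntervalIntegrable g MeasureTheory.volume a c := by
    intro a c
    rw [intervalIntegrable_iff]
    have hμ : MeasureTheory.volume (Set.uIoc a c) < ⊤ := measure_Ioc_lt_top
    have hcint : MeasureTheory.IntegrableOn (fun _ : ℝ => B₁ + B₂) (Set.uIoc a c)
        MeasureTheory.volume := MeasureTheory.integrableOn_const hμ.ne
    refine MeasureTheory.Integrable.mono' hcint
      hgm.aestronglyMeasurable.restrict (MeasureTheory.ae_of_all _ fun σ => ?_)
    rw [Real.norm_eq_abs, abs_of_nonneg (hgnn σ)]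
    exact hgub σ
  -- setup
  set K := Lb * LF + Lu with hKdef
  have hK : 0 ≤ K := by positivity
  have hX₁cont : ContinuousOn X₁ (Set.Icc s t) := fun τ hτ => (hX₁ τ hτ).continuousWithinAt
  have hX₂cont : ContinuousOn X₂ (Set.Icc s t) := fun τ hτ => (hX₂ τ hτ).continuousWithinAt
  -- a continuous extension of X₂ by clamping
  set c : ℝ → ℝ := fun σ => max s (min t σ) with hcdef
  have hccont : Continuous c := continuous_const.max (continuous_const.min continuous_id)
  have hcmem : ∀ σ, c σ ∈ Set.Icc s t :=
    fun σ => ⟨le_max_left _ _, max_le hst.le (min_le_left _ _)⟩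
  have hceq : ∀ σ ∈ Set.Icc s t, c σ = σ := by
    intro σ hσ
    simp only [hcdef]
    rw [min_eq_right hσ.2, max_eq_right hσ.1]
  set Z : ℝ → E3 := fun σ => X₂ (c σ) with hZdef
  have hZcont : Continuous Z := hX₂cont.comp_continuous hccont hcmem
  have hZeq : ∀ σ ∈ Set.Icc s t, Z σ = X₂ σ := by
    intro σ hσ; simp only [hZdef]; rw [hceq σ hσ]
  -- the comparison data (time reversed)
  set ε : ℝ → ℝ := fun r => ‖F₁ (t - r, Z (t - r)) - F₂ (t - r, Z (t - r))‖ with hεdef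
  have hεcont : Continuous ε := by
    have hcr : Continuous fun r : ℝ => (t - r, Z (t - r)) :=
      (continuous_const.sub continuous_id).prodMk
        (hZcont.comp (continuous_const.sub continuous_id))
    exact ((hF₁c.comp hcr).sub (hF₂c.comp hcr)).norm
  have hεnn : ∀ r, 0 ≤ ε r := fun r => norm_nonneg _
  set f : ℝ → E3 := fun r => X₁ (t - r) - X₂ (t - r) with hfdef
  set f' : ℝ → E3 := fun r =>
    (b (F₂ (t - r, X₂ (t - r))) - b (F₁ (t - r, X₁ (t - r)))) +
      (u (t - r, X₂ (t - r)) - u (t - r, X₁ (t - r))) with hf'def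
  have hmap : ∀ r ∈ Set.Icc (0:ℝ) (t - s), t - r ∈ Set.Icc s t :=
    fun r hr => ⟨by linarith [hr.2], by linarith [hr.1]⟩
  have hfd : ∀ r ∈ Set.Icc (0:ℝ) (t - s),
      HasDerivWithinAt f (f' r) (Set.Icc 0 (t - s)) r := by
    intro r hr
    have hmaps : Set.MapsTo (fun r : ℝ => t - r) (Set.Icc 0 (t - s)) (Set.Icc s t) :=
      fun a ha => hmap a ha
    have hneg : HasDerivWithinAt (fun r : ℝ => t - r) (-1 : ℝ) (Set.Icc 0 (t - s)) r := by
      simpa using (hasDerivWithinAt_id r (Set.Icc (0:ℝ) (t-s))).const_sub t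
    have h₁ := (hX₁ (t - r) (hmap r hr)).scomp r hneg hmaps
    have h₂ := (hX₂ (t - r) (hmap r hr)).scomp r hneg hmaps
    have h₃ := h₁.sub h₂
    refine h₃.congr_deriv ?_
    simp only [hf'def]
    module
  have hfcont : ContinuousOn f (Set.Icc (0:ℝ) (t - s)) :=
    fun r hr => (hfd r hr).continuousWithinAt
  have hfd' : ∀ r ∈ Set.Ico (0:ℝ) (t - s), HasDerivWithinAt f (f' r) (Set.Ici r) r :=
    fun r hr => (hfd r ⟨hr.1, hr.2.le⟩).mono_of_mem_nhdsWithin (Icc_mem_nhdsGE_of_mem hr)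
  -- the pointwise differential inequality
  have hbound : ∀ r ∈ Set.Ico (0:ℝ) (t - s), ‖f' r‖ ≤ K * ‖f r‖ + Lb * ε r := by
    intro r hr
    have hτ' : t - r ∈ Set.Icc s t := hmap r ⟨hr.1, hr.2.le⟩
    have hZ' : Z (t - r) = X₂ (t - r) := hZeq _ hτ'
    have h1 : ‖f' r‖ ≤ ‖b (F₂ (t - r, X₂ (t - r))) - b (F₁ (t - r, X₁ (t - r)))‖ +
        ‖u (t - r, X₂ (t - r)) - u (t - r, X₁ (t - r))‖ := norm_add_le _ _
    have h2 : ‖b (F₂ (t - r, X₂ (t - r))) - b (F₁ (t - r, X₁ (t - r)))‖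
        ≤ Lb * ‖F₂ (t - r, X₂ (t - r)) - F₁ (t - r, X₁ (t - r))‖ := hb _ _
    have h3 : ‖F₂ (t - r, X₂ (t - r)) - F₁ (t - r, X₁ (t - r))‖
        ≤ ε r + LF * ‖f r‖ := by
      have ha : F₂ (t - r, X₂ (t - r)) - F₁ (t - r, X₁ (t - r))
          = (F₂ (t - r, X₂ (t - r)) - F₁ (t - r, X₂ (t - r)))
            + (F₁ (t - r, X₂ (t - r)) - F₁ (t - r, X₁ (t - r))) := by abel
      rw [ha]
      refine (norm_add_le _ _).trans (add_le_add ?_ ?_)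
      · rw [norm_sub_rev]
        simp only [hεdef, hZ']
        exact le_rfl
      · have := hF₁ (t - r) (X₂ (t - r)) (X₁ (t - r))
        have hrev : ‖X₂ (t - r) - X₁ (t - r)‖ = ‖f r‖ := by
          simp only [hfdef]; rw [norm_sub_rev]
        rw [hrev] at this; exact this
    have h4 : ‖u (t - r, X₂ (t - r)) - u (t - r, X₁ (t - r))‖ ≤ Lu * ‖f r‖ := by
      have := hu (t - r) (X₂ (t - r)) (X₁ (t - r))
      have hrev : ‖X₂ (t - r) - X₁ (t - r)‖ = ‖f r‖ := by
        simp only [hfdef]; rw [norm_sub_rev]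
      rw [hrev] at this; exact this
    have h5 : Lb * ‖F₂ (t - r, X₂ (t - r)) - F₁ (t - r, X₁ (t - r))‖
        ≤ Lb * (ε r + LF * ‖f r‖) := mul_le_mul_of_nonneg_left h3 hLb
    simp only [hKdef]; nlinarith [h1, h2, h4, h5]
  -- Gronwall via the fencing theorem
  have key : ∀ r ∈ Set.Icc (0:ℝ) (t - s),
      ‖f r‖ ≤ (Lb * ∫ σ in (0:ℝ)..r, ε σ) * Real.exp (K * r) := by
    intro r hr
    have hInn : ∀ ρ : ℝ, 0 ≤ ρ → 0 ≤ ∫ σ in (0:ℝ)..ρ, ε σ :=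
      fun ρ hρ => intervalIntegral.integral_nonneg hρ fun σ _ => hεnn σ
    have main : ∀ η : ℝ, 0 < η →
        ‖f r‖ ≤ (η + Lb * ∫ σ in (0:ℝ)..r, ε σ) * Real.exp ((K + η) * r) := by
      intro η hη
      set Bf : ℝ → ℝ := fun ρ => (η + Lb * ∫ σ in (0:ℝ)..ρ, ε σ) * Real.exp ((K + η) * ρ)
        with hBfdef
      have hBd : ∀ ρ : ℝ, HasDerivAt Bf
          (Lb * ε ρ * Real.exp ((K + η) * ρ)
            + (η + Lb * ∫ σ in (0:ℝ)..ρ, ε σ) * ((K + η) * Real.exp ((K + η) * ρ))) ρ := by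
        intro ρ
        have h1 : HasDerivAt (fun ρ => ∫ σ in (0:ℝ)..ρ, ε σ) (ε ρ) ρ :=
          intervalIntegral.integral_hasDerivAt_right (hεcont.intervalIntegrable _ _)
            (hεcont.stronglyMeasurableAtFilter _ _) hεcont.continuousAt
        have h2 := ((hasDerivAt_id ρ).const_mul (K + η)).exp
        have h3 := ((h1.const_mul Lb).const_add η).mul h2
        simp only [id_eq, mul_one] at h3
        refine h3.congr_deriv ?_
        ring
      refine image_norm_le_of_norm_deriv_right_lt_deriv_boundary hfcont hfd' ?_ hBd ?_ hr
      · have hf0 : f 0 = 0 := by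
          simp only [hfdef, sub_zero, hX₁t, hX₂t, sub_self]
        rw [hf0, norm_zero]
        simp only [hBfdef, intervalIntegral.integral_same, mul_zero, add_zero, zero_mul,
          Real.exp_zero, mul_one]
        linarith
      · intro ρ hρ hcontact
        have hIρ : 0 ≤ ∫ σ in (0:ℝ)..ρ, ε σ := hInn ρ hρ.1
        have hexp1 : 1 ≤ Real.exp ((K + η) * ρ) := by
          rw [← Real.exp_zero]
          exact Real.exp_le_exp.2 (by nlinarith [hρ.1])
        have hb1 := hbound ρ hρ
        rw [hcontact] at hb1
        have hLbε : 0 ≤ Lb * ε ρ := mul_nonneg hLb (hεnn ρ)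
        have hLbI : 0 ≤ Lb * ∫ σ in (0:ℝ)..ρ, ε σ := mul_nonneg hLb hIρ
        have hexp0 : 0 < Real.exp ((K + η) * ρ) := Real.exp_pos _
        calc ‖f' ρ‖ ≤ K * Bf ρ + Lb * ε ρ := hb1
          _ < Lb * ε ρ * Real.exp ((K + η) * ρ)
              + (η + Lb * ∫ σ in (0:ℝ)..ρ, ε σ) * ((K + η) * Real.exp ((K + η) * ρ)) := by
            simp only [hBfdef]
            have hpos : 0 < (η + Lb * ∫ σ in (0:ℝ)..ρ, ε σ) * Real.exp ((K + η) * ρ) :=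
              mul_pos (by linarith) hexp0
            nlinarith [mul_nonneg hLbε (sub_nonneg.2 hexp1), mul_pos hη hpos]
    have hlim : Filter.Tendsto
        (fun η : ℝ => (η + Lb * ∫ σ in (0:ℝ)..r, ε σ) * Real.exp ((K + η) * r))
        (nhdsWithin 0 (Set.Ioi 0))
        (nhds ((0 + Lb * ∫ σ in (0:ℝ)..r, ε σ) * Real.exp ((K + 0) * r))) := by
      apply Filter.Tendsto.mono_left ?_ nhdsWithin_le_nhds
      apply Continuous.tendsto
      exact (continuous_id.add continuous_const).mul
        (((continuous_const.add continuous_id).mul continuous_const).rexp)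
    have hev : ∀ᶠ η in nhdsWithin (0:ℝ) (Set.Ioi 0),
        ‖f r‖ ≤ (η + Lb * ∫ σ in (0:ℝ)..r, ε σ) * Real.exp ((K + η) * r) :=
      eventually_nhdsWithin_of_forall fun η hη => main η hη
    have := ge_of_tendsto hlim hev
    simpa using this
  -- conclusion
  intro τ hτ
  have hrmem : t - τ ∈ Set.Icc (0:ℝ) (t - s) := ⟨by linarith [hτ.2], by linarith [hτ.1]⟩
  have h1 := key (t - τ) hrmem
  have hfτ : f (t - τ) = X₁ τ - X₂ τ := by
    simp only [hfdef, sub_sub_cancel]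
  rw [hfτ] at h1
  refine h1.trans ?_
  have hεint : (∫ σ in (0:ℝ)..(t - τ), ε σ)
      = ∫ σ in τ..t, ‖F₁ (σ, Z σ) - F₂ (σ, Z σ)‖ := by
    have := intervalIntegral.integral_comp_sub_left
      (fun σ => ‖F₁ (σ, Z σ) - F₂ (σ, Z σ)‖) t (a := (0:ℝ)) (b := t - τ)
    simpa using this
  have hmono : (∫ σ in τ..t, ‖F₁ (σ, Z σ) - F₂ (σ, Z σ)‖) ≤ ∫ σ in τ..t, g σ := by
    apply intervalIntegral.integral_mono_on (by linarith [hτ.2])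
    · have hcont : Continuous fun σ => ‖F₁ (σ, Z σ) - F₂ (σ, Z σ)‖ := by
        have hcr : Continuous fun σ : ℝ => (σ, Z σ) := continuous_id.prodMk hZcont
        exact ((hF₁c.comp hcr).sub (hF₂c.comp hcr)).norm
      exact hcont.intervalIntegrable _ _
    · exact hgint τ t
    · intro σ _
      exact hgle σ (Z σ)
  have hfinal : Lb * ∫ σ in (0:ℝ)..(t - τ), ε σ ≤ Lb * ∫ σ in τ..t, g σ := by
    rw [hεint]
    exact mul_le_mul_of_nonneg_left hmono hLb
  exact mul_le_mul_of_nonneg_right hfinal (Real.exp_pos _).le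
end
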